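/- Let (A_m)_{m∈ℤ} be invertible operators with sup_m{‖A_m‖, ‖A_m^{-1}‖} < ∞ admitting a strong partial exponential dichotomy, and let F_n = A_n + f_n with f_n c-Lipschitz, c sufficiently small, and ‖f_n‖_sup ≤ δ = Lε. Then there exist continuous maps h_m : X → X and τ_m : X → E_m^c such that for each m: h_{m+1} ∘ F_m = A_m ∘ h_m + τ_{m+1} ∘ F_m, ‖h_m − Id‖_sup ≤ ε, ‖τ_m‖_sup ≤ ε, and h_m(x) − x ∈ E_m^{s,u} for all x ∈ X. -/

import Mathlib

variable {X : Type*} [NormedAddCommGroup X] [NormedSpace ℝ X]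

/-- A strong partial exponential dichotomy for a sequence of bounded invertible linear
operators `(A_m)_{m∈ℤ}`: projections `P¹, P², P³` summing to the identity, commuting
with the dynamics, a two-sided cocycle `𝒜`, and constants `D > 0`, `0 ≤ a < b`,
`0 ≤ c < d` with the four exponential bounds. -/
structure StrongPartialDichotomy (A : ℤ → X →L[ℝ] X) where
  Ainv : ℤ → X →L[ℝ] X
  left_inv : ∀ n, (Ainv n).comp (A n) = ContinuousLinearMap.id ℝ X
  right_inv : ∀ n, (A n).comp (Ainv n) = ContinuousLinearMap.id ℝ X
  P1 : ℤ → X →L[ℝ] X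
  P2 : ℤ → X →L[ℝ] X
  P3 : ℤ → X →L[ℝ] X
  D : ℝ
  a : ℝ
  b : ℝ
  c : ℝ
  d : ℝ
  hD : 0 < D
  ha : 0 ≤ a
  hab : a < b
  hc : 0 ≤ c
  hcd : c < d
  proj1 : ∀ n, (P1 n).comp (P1 n) = P1 n
  proj2 : ∀ n, (P2 n).comp (P2 n) = P2 n
  proj3 : ∀ n, (P3 n).comp (P3 n) = P3 n
  sum_eq : ∀ n (x : X), P1 n x + P2 n x + P3 n x = x
  comm1 : ∀ n, (A n).comp (P1 n) = (P1 (n + 1)).comp (A n)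
  comm2 : ∀ n, (A n).comp (P2 n) = (P2 (n + 1)).comp (A n)
  comm3 : ∀ n, (A n).comp (P3 n) = (P3 (n + 1)).comp (A n)
  /-- the two-sided cocycle `𝒜(m,n)` -/
  coc : ℤ → ℤ → X →L[ℝ] X
  coc_self : ∀ n, coc n n = ContinuousLinearMap.id ℝ X
  coc_step : ∀ m n, coc (m + 1) n = (A m).comp (coc m n)
  coc_comp : ∀ k m n : ℤ, (coc n m).comp (coc m k) = coc n k
  /-- `‖𝒜(m,n)P_n¹‖ ≤ D e^{-d(m-n)}` for `m ≥ n` -/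
  bound1 : ∀ m n : ℤ, n ≤ m → ‖(coc m n).comp (P1 n)‖ ≤ D * Real.exp (-d * ((m - n : ℤ) : ℝ))
  /-- `‖𝒜(m,n)P_n²‖ ≤ D e^{-b(n-m)}` for `m ≤ n` -/
  bound2 : ∀ m n : ℤ, m ≤ n → ‖(coc m n).comp (P2 n)‖ ≤ D * Real.exp (-b * ((n - m : ℤ) : ℝ))
  /-- `‖𝒜(m,n)P_n³‖ ≤ D e^{a(m-n)}` for `m ≥ n` -/
  bound3f : ∀ m n : ℤ, n ≤ m → ‖(coc m n).comp (P3 n)‖ ≤ D * Real.exp (a * ((m - n : ℤ) : ℝ))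
  /-- `‖𝒜(m,n)P_n³‖ ≤ D e^{c(n-m)}` for `m ≤ n` -/
  bound3b : ∀ m n : ℤ, m ≤ n → ‖(coc m n).comp (P3 n)‖ ≤ D * Real.exp (c * ((n - m : ℤ) : ℝ))

/- STATEMENT 16: quasi-stability of strong partially dichotomic sequences. For
(A_m) invertible with uniformly bounded norms and inverses admitting a strong partial
exponential dichotomy, and F_n = A_n + f_n with f_n c-Lipschitz, c sufficiently small
and ‖f_n‖_sup ≤ δ = Lε (L the l^∞ Lipschitz quasi-shadowing constant, ε sufficiently
small), there exist continuous maps h_m : X → X and τ_m : X → E_m^c with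
h_{m+1} ∘ F_m = A_m ∘ h_m + τ_{m+1} ∘ F_m, ‖h_m − Id‖_sup ≤ ε, ‖τ_m‖_sup ≤ ε and
h_m(x) − x ∈ E_m^{s,u}. -/
set_option linter.unusedSectionVars false
set_option maxHeartbeats 2000000

namespace QuasiStabAux

variable {X : Type*} [NormedAddCommGroup X] [NormedSpace ℝ X]

def fwdE (E : ℤ → X ≃ X) : ℕ → X ≃ X
  | 0 => Equiv.refl X
  | k+1 => (fwdE E k).trans (E k)

def bwdE (E : ℤ → X ≃ X) : ℕ → X ≃ X
  | 0 => Equiv.refl X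
  | k+1 => (bwdE E k).trans (E (Int.negSucc k)).symm

def psi (E : ℤ → X ≃ X) : ℤ → X ≃ X
  | Int.ofNat k => fwdE E k
  | Int.negSucc k => bwdE E (k+1)

lemma psi_step (E : ℤ → X ≃ X) (n : ℤ) : psi E (n + 1) = (psi E n).trans (E n) := by
  cases n with
  | ofNat k =>
      have h : (Int.ofNat k) + 1 = Int.ofNat (k+1) := rfl
      rw [h]
      rfl
  | negSucc k =>
      cases k with
      | zero =>
          have h : Int.negSucc 0 + 1 = Int.ofNat 0 := by decide
          rw [h]
          ext x
          simp [psi, fwdE, bwdE]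
      | succ j =>
          have h : Int.negSucc (j+1) + 1 = Int.negSucc j := by
            rw [Int.negSucc_eq, Int.negSucc_eq]; push_cast; ring
          rw [h]
          show bwdE E (j+1) = (bwdE E (j+2)).trans (E (Int.negSucc (j+1)))
          ext x
          simp [bwdE]

def phi (E : ℤ → X ≃ X) (n m : ℤ) : X ≃ X := (psi E m).symm.trans (psi E n)

lemma phi_self (E : ℤ → X ≃ X) (m : ℤ) (x : X) : phi E m m x = x := by
  simp [phi]

lemma phi_step (E : ℤ → X ≃ X) (n m : ℤ) (x : X) :
    phi E (n+1) m x = E n (phi E n m x) := by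
  simp [phi, psi_step]

lemma phi_comp (E : ℤ → X ≃ X) (n k m : ℤ) (x : X) :
    phi E n k (phi E k m x) = phi E n m x := by
  simp [phi]

lemma fwdE_cont (E : ℤ → X ≃ X) (hE : ∀ n, Continuous (E n)) (k : ℕ) :
    Continuous (fwdE E k) := by
  induction k with
  | zero => exact continuous_id
  | succ k ih =>
      have : ⇑(fwdE E (k+1)) = ⇑(E k) ∘ ⇑(fwdE E k) := by funext x; simp [fwdE]
      rw [this]; exact (hE _).comp ih

lemma fwdE_symm_cont (E : ℤ → X ≃ X) (hE : ∀ n, Continuous (E n).symm) (k : ℕ) :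
    Continuous (fwdE E k).symm := by
  induction k with
  | zero => exact continuous_id
  | succ k ih =>
      have : ⇑(fwdE E (k+1)).symm = ⇑(fwdE E k).symm ∘ ⇑(E k).symm := by
        funext x; simp [fwdE]
      rw [this]; exact ih.comp (hE _)

lemma bwdE_cont (E : ℤ → X ≃ X) (hE : ∀ n, Continuous (E n).symm) (k : ℕ) :
    Continuous (bwdE E k) := by
  induction k with
  | zero => exact continuous_id
  | succ k ih =>
      have : ⇑(bwdE E (k+1)) = ⇑(E (Int.negSucc k)).symm ∘ ⇑(bwdE E k) := by
        funext x; simp [bwdE]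
      rw [this]; exact (hE _).comp ih

lemma bwdE_symm_cont (E : ℤ → X ≃ X) (hE : ∀ n, Continuous (E n)) (k : ℕ) :
    Continuous (bwdE E k).symm := by
  induction k with
  | zero => exact continuous_id
  | succ k ih =>
      have : ⇑(bwdE E (k+1)).symm = ⇑(bwdE E k).symm ∘ ⇑(E (Int.negSucc k)) := by
        funext x; simp [bwdE]
      rw [this]; exact ih.comp (hE _)

lemma phi_cont (E : ℤ → X ≃ X) (hE : ∀ n, Continuous (E n))
    (hE' : ∀ n, Continuous (E n).symm) (n m : ℤ) : Continuous (phi E n m) := by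
  have h1 : ∀ j : ℤ, Continuous (psi E j) := by
    intro j; cases j with
    | ofNat k => exact fwdE_cont E hE k
    | negSucc k => exact bwdE_cont E hE' (k+1)
  have h2 : ∀ j : ℤ, Continuous (psi E j).symm := by
    intro j; cases j with
    | ofNat k => exact fwdE_symm_cont E hE' k
    | negSucc k => exact bwdE_symm_cont E hE (k+1)
  have : ⇑(phi E n m) = ⇑(psi E n) ∘ ⇑(psi E m).symm := by funext x; simp [phi]
  rw [this]; exact (h1 n).comp (h2 m)

lemma orth_of_idem {R : Type*} [Ring R] [Module ℝ R]
    (e f g : R) (he : e * e = e) (hf : f * f = f) (hg : g * g = g)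
    (hsum : e + f + g = 1) : g * e = 0 := by
  have hef : e + g = 1 - f := by rw [← hsum]; abel
  have h2 : (e + g) * (e + g) = e + g := by
    rw [hef, sub_mul, mul_sub, mul_sub, mul_one, mul_one, one_mul, hf]; abel
  have h3 : (e+g)*(e+g) = e + (e*g + g*e) + g := by
    rw [add_mul, mul_add, mul_add, he, hg]; abel
  have h1 : e*g + g*e = 0 := by
    have h4 := h2.symm.trans h3
    have h5 : e + g = e + ((e*g + g*e) + g) := by rw [h4]; abel
    have h6 := add_left_cancel h5
    exact (right_eq_add.mp h6)
  have ha : e*g + e*g*e = 0 := by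
    have : e*(e*g + g*e) = 0 := by rw [h1, mul_zero]
    rw [mul_add, ← mul_assoc, he, ← mul_assoc] at this
    exact this
  have hb : e*g*e + g*e = 0 := by
    have : (e*g + g*e)*e = 0 := by rw [h1, zero_mul]
    rw [add_mul, mul_assoc g e e, he] at this
    exact this
  have h5 : e*g = g*e := by
    rw [eq_neg_of_add_eq_zero_left ha, eq_neg_of_add_eq_zero_right hb]
  have h8 : g*e + g*e = 0 := by rw [h5] at h1; exact h1
  have h9 : ((1:ℝ)/2) • (g*e + g*e) = 0 := by rw [h8, smul_zero]
  rw [← two_smul ℝ (g*e), smul_smul] at h9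
  norm_num at h9
  exact h9

end QuasiStabAux


theorem quasi_stability
    {X : Type*} [NormedAddCommGroup X] [NormedSpace ℝ X] [CompleteSpace X]
    (A : ℤ → X →L[ℝ] X) (spd : StrongPartialDichotomy A)
    (M : ℝ) (hM : ∀ m : ℤ, ‖A m‖ ≤ M ∧ ‖spd.Ainv m‖ ≤ M) :
    ∃ c₀ > (0 : ℝ), ∃ L > (0 : ℝ), ∃ ε₀ > (0 : ℝ),
      ∀ ε : ℝ, 0 < ε → ε ≤ ε₀ →
      ∀ (c : ℝ), 0 < c → c ≤ c₀ →
      ∀ f : ℤ → X → X,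
        (∀ (n : ℤ) (x y : X), ‖f n x - f n y‖ ≤ c * ‖x - y‖) →
        (∀ (n : ℤ) (x : X), ‖f n x‖ ≤ L * ε) →
      ∀ F : ℤ → X → X, (∀ (n : ℤ) (x : X), F n x = A n x + f n x) →
      ∃ h τ : ℤ → X → X,
        (∀ m : ℤ, Continuous (h m)) ∧
        (∀ m : ℤ, Continuous (τ m)) ∧
        -- τ_m takes values in the central direction E_m^c
        (∀ (m : ℤ) (x : X), spd.P3 m (τ m x) = τ m x) ∧
        -- the conjugacy equation up to central movement
        (∀ (m : ℤ) (x : X), h (m + 1) (F m x) = A m (h m x) + τ (m + 1) (F m x)) ∧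
        (∀ (m : ℤ) (x : X), ‖h m x - x‖ ≤ ε) ∧
        (∀ (m : ℤ) (x : X), ‖τ m x‖ ≤ ε) ∧
        -- h_m(x) − x ∈ E_m^{s,u}
        (∀ (m : ℤ) (x : X), spd.P3 m (h m x - x) = 0) := by
  classical
  have hM0 : (0:ℝ) ≤ M := le_trans (norm_nonneg (A 0)) (hM 0).1
  have hM1 : (0:ℝ) < M + 1 := by linarith
  have hd : 0 < spd.d := lt_of_le_of_lt spd.hc spd.hcd
  have hb : 0 < spd.b := lt_of_le_of_lt spd.ha spd.hab
  have hD := spd.hD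
  set rd := Real.exp (-spd.d) with hrd_def
  set rb := Real.exp (-spd.b) with hrb_def
  have hrd0 : 0 ≤ rd := (Real.exp_pos _).le
  have hrb0 : 0 ≤ rb := (Real.exp_pos _).le
  have hrd1 : rd < 1 := by
    rw [hrd_def]
    calc Real.exp (-spd.d) < Real.exp 0 := Real.exp_lt_exp.mpr (by linarith)
      _ = 1 := Real.exp_zero
  have hrb1 : rb < 1 := by
    rw [hrb_def]
    calc Real.exp (-spd.b) < Real.exp 0 := Real.exp_lt_exp.mpr (by linarith)
      _ = 1 := Real.exp_zero
  have hIrd : 0 < 1 - rd := by linarith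
  have hIrb : 0 < 1 - rb := by linarith
  set S := spd.D * (1 - rd)⁻¹ + spd.D * (1 - rb)⁻¹ + spd.D + 1 with hS_def
  have hSrd : 0 ≤ spd.D * (1-rd)⁻¹ := by positivity
  have hSrb : 0 ≤ spd.D * (1-rb)⁻¹ := by positivity
  have hSpos : 0 < S := by rw [hS_def]; linarith
  -- norms of projections
  have hP3norm : ∀ n, ‖spd.P3 n‖ ≤ spd.D := by
    intro n
    have h0 := spd.bound3f n n le_rfl
    simpa [spd.coc_self, ContinuousLinearMap.id_comp] using h0
  -- orthogonality of the projections
  have hsum1 : ∀ n, spd.P1 n + spd.P2 n + spd.P3 n = (1 : X →L[ℝ] X) := by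
    intro n; ext x
    simpa using spd.sum_eq n x
  have horth31 : ∀ (n : ℤ) (v : X), spd.P3 n (spd.P1 n v) = 0 := by
    intro n v
    have h0 := QuasiStabAux.orth_of_idem (spd.P1 n) (spd.P2 n) (spd.P3 n)
      (spd.proj1 n) (spd.proj2 n) (spd.proj3 n) (hsum1 n)
    have h1 := congrArg (fun T : X →L[ℝ] X => T v) h0
    simpa using h1
  have horth32 : ∀ (n : ℤ) (v : X), spd.P3 n (spd.P2 n v) = 0 := by
    intro n v
    have hsum' : spd.P2 n + spd.P1 n + spd.P3 n = (1 : X →L[ℝ] X) := by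
      rw [← hsum1 n]; abel
    have h0 := QuasiStabAux.orth_of_idem (spd.P2 n) (spd.P1 n) (spd.P3 n)
      (spd.proj2 n) (spd.proj1 n) (spd.proj3 n) hsum'
    have h1 := congrArg (fun T : X →L[ℝ] X => T v) h0
    simpa using h1
  -- the cocycle commutes with P3
  have hcomm3 : ∀ (m n : ℤ) (v : X), spd.coc m n (spd.P3 n v) = spd.P3 m (spd.coc m n v) := by
    have fwd : ∀ n m : ℤ, n ≤ m → ∀ v : X,
        spd.coc m n (spd.P3 n v) = spd.P3 m (spd.coc m n v) := by
      intro n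
      refine Int.le_induction ?_ ?_
      · intro v; simp [spd.coc_self]
      · intro m _ ih v
        rw [spd.coc_step]
        simp only [ContinuousLinearMap.comp_apply]
        rw [ih v]
        have h1 := ContinuousLinearMap.ext_iff.mp (spd.comm3 m) (spd.coc m n v)
        simpa using h1
    intro m n v
    rcases le_total n m with hle | hle
    · exact fwd n m hle v
    · have hinv : ∀ w : X, spd.coc m n (spd.coc n m w) = w := by
        intro w
        have h0 := ContinuousLinearMap.ext_iff.mp (spd.coc_comp m n m) w
        simpa [spd.coc_self] using h0
      have hinv' : ∀ w : X, spd.coc n m (spd.coc m n w) = w := by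
        intro w
        have h0 := ContinuousLinearMap.ext_iff.mp (spd.coc_comp n m n) w
        simpa [spd.coc_self] using h0
      have h1 := fwd m n hle (spd.coc m n v)
      rw [hinv' v] at h1
      rw [← h1]
      exact hinv _
  refine ⟨1/(2*(M+1)), by positivity, 1/S, by positivity, 1, one_pos, ?_⟩
  intro ε hε hε1 c hc hcc₀ f hlip hbnd F hF
  have hNE : Nonempty X := ⟨0⟩
  have hcM : c * (M+1) ≤ 1/2 := by
    have h2 : 0 < 2*(M+1) := by linarith
    calc c * (M+1) ≤ (1/(2*(M+1))) * (M+1) := by nlinarith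
      _ = 1/2 := by field_simp
  have hfb : ∀ (n : ℤ) (x : X), ‖f n x‖ ≤ ε / S := by
    intro n x
    calc ‖f n x‖ ≤ 1/S * ε := hbnd n x
      _ = ε / S := by ring
  have hfbnn : (0:ℝ) ≤ ε / S := by positivity
  -- basic facts about A and its inverse
  have hAinvA : ∀ (n : ℤ) (x : X), spd.Ainv n (A n x) = x := by
    intro n x
    have h0 := ContinuousLinearMap.ext_iff.mp (spd.left_inv n) x
    simpa using h0
  have hAAinv : ∀ (n : ℤ) (x : X), A n (spd.Ainv n x) = x := by
    intro n x
    have h0 := ContinuousLinearMap.ext_iff.mp (spd.right_inv n) x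
    simpa using h0
  have hAinv : ∀ (n : ℤ) (u : X), ‖spd.Ainv n u‖ ≤ (M+1) * ‖u‖ := by
    intro n u
    refine le_trans ((spd.Ainv n).le_opNorm u) ?_
    have := (hM n).2
    nlinarith [norm_nonneg u]
  -- lower bound: F n is expansive at most by 2(M+1)
  have hlb : ∀ (n : ℤ) (u v : X), ‖u - v‖ ≤ (2*(M+1)) * ‖F n u - F n v‖ := by
    intro n u v
    have h1 : ‖u - v‖ ≤ (M+1) * ‖A n u - A n v‖ := by
      have he : u - v = spd.Ainv n (A n u - A n v) := by
        rw [map_sub, hAinvA, hAinvA]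
      calc ‖u - v‖ = ‖spd.Ainv n (A n u - A n v)‖ := by rw [← he]
        _ ≤ (M+1) * ‖A n u - A n v‖ := hAinv _ _
    have h2 : ‖A n u - A n v‖ ≤ ‖F n u - F n v‖ + c * ‖u - v‖ := by
      have he : A n u - A n v = (F n u - F n v) - (f n u - f n v) := by
        rw [hF, hF]; abel
      calc ‖A n u - A n v‖ = ‖(F n u - F n v) - (f n u - f n v)‖ := by rw [← he]
        _ ≤ ‖F n u - F n v‖ + ‖f n u - f n v‖ := norm_sub_le _ _
        _ ≤ ‖F n u - F n v‖ + c * ‖u - v‖ := by linarith [hlip n u v]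
    nlinarith [norm_nonneg (u - v), norm_nonneg (F n u - F n v)]
  -- surjectivity of F n via the contraction principle
  have hsurj : ∀ (n : ℤ) (y : X), ∃ x, F n x = y := by
    intro n y
    have hlipT : LipschitzWith (2⁻¹ : NNReal) (fun x => spd.Ainv n (y - f n x)) := by
      apply LipschitzWith.of_dist_le_mul
      intro u v
      rw [dist_eq_norm, dist_eq_norm]
      have he : spd.Ainv n (y - f n u) - spd.Ainv n (y - f n v)
          = spd.Ainv n (f n v - f n u) := by
        rw [← map_sub]; congr 1; abel
      rw [he]
      have hco : ((2⁻¹ : NNReal) : ℝ) = 2⁻¹ := by norm_num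
      rw [hco]
      calc ‖spd.Ainv n (f n v - f n u)‖ ≤ (M+1) * ‖f n v - f n u‖ := hAinv _ _
        _ ≤ (M+1) * (c * ‖v - u‖) := by
            have := hlip n v u
            nlinarith
        _ ≤ 2⁻¹ * ‖u - v‖ := by
            rw [norm_sub_rev v u]
            nlinarith [norm_nonneg (u - v)]
    have hcontr : ContractingWith (2⁻¹) (fun x => spd.Ainv n (y - f n x)) :=
      ⟨by rw [← NNReal.coe_lt_coe]; norm_num, hlipT⟩
    refine ⟨hcontr.fixedPoint _, ?_⟩
    have hfix := hcontr.fixedPoint_isFixedPt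
    set x₀ := ContractingWith.fixedPoint _ hcontr with hx₀
    have hA : A n x₀ = y - f n x₀ := by
      conv_lhs => rw [← hfix]
      exact hAAinv n _
    rw [hF, hA]; abel
  choose Finv hFinv using hsurj
  have hlinv : ∀ (n : ℤ) (x : X), Finv n (F n x) = x := by
    intro n x
    have h0 := hlb n (Finv n (F n x)) x
    rw [hFinv n (F n x)] at h0
    have h1 : ‖Finv n (F n x) - x‖ ≤ 0 := by simpa using h0
    have h2 := norm_le_zero_iff.mp h1
    exact sub_eq_zero.mp h2
  -- continuity
  have hfcont : ∀ n : ℤ, Continuous (f n) := by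
    intro n
    have hl : LipschitzWith (Real.toNNReal c) (f n) := by
      apply LipschitzWith.of_dist_le_mul
      intro x y
      rw [dist_eq_norm, dist_eq_norm, Real.coe_toNNReal c hc.le]
      exact hlip n x y
    exact hl.continuous
  have hFcont : ∀ n : ℤ, Continuous (F n) := by
    intro n
    have hfe : F n = fun x => A n x + f n x := funext (hF n)
    rw [hfe]
    exact ((A n).continuous).add (hfcont n)
  have hFinvcont : ∀ n : ℤ, Continuous (Finv n) := by
    intro n
    have hl : LipschitzWith (Real.toNNReal (2*(M+1))) (Finv n) := by
      apply LipschitzWith.of_dist_le_mul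
      intro x y
      rw [dist_eq_norm, dist_eq_norm, Real.coe_toNNReal (2*(M+1)) (by linarith)]
      have h0 := hlb n (Finv n x) (Finv n y)
      rwa [hFinv, hFinv] at h0
    exact hl.continuous
  -- the homeomorphisms E n and their orbit cocycle phi
  obtain ⟨E, hEapp, hEcont, hEscont⟩ :
      ∃ E : ℤ → X ≃ X, (∀ n x, E n x = F n x) ∧ (∀ n, Continuous (E n)) ∧
        (∀ n, Continuous (E n).symm) := by
    refine ⟨fun n => ⟨F n, Finv n, hlinv n, hFinv n⟩, fun n x => rfl, ?_, ?_⟩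
    · intro n; exact hFcont n
    · intro n; exact hFinvcont n
  have hshift : ∀ (m j : ℤ) (x : X),
      QuasiStabAux.phi E j (m+1) (F m x) = QuasiStabAux.phi E j m x := by
    intro m j x
    have h1 : F m x = QuasiStabAux.phi E (m+1) m x := by
      rw [QuasiStabAux.phi_step, QuasiStabAux.phi_self, hEapp]
    rw [h1, QuasiStabAux.phi_comp]
  -- the two series
  set T1 : ℤ → ℕ → X → X := fun m k x =>
    spd.coc m (m - k) (spd.P1 (m - k) (f (m - 1 - k) (QuasiStabAux.phi E (m - 1 - k) m x)))
    with hT1def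
  set T2 : ℤ → ℕ → X → X := fun m k x =>
    spd.coc m (m + k + 1) (spd.P2 (m + k + 1) (f (m + k) (QuasiStabAux.phi E (m + k) m x)))
    with hT2def
  -- termwise bounds
  have hbT1 : ∀ (m : ℤ) (k : ℕ) (x : X), ‖T1 m k x‖ ≤ (spd.D * (ε/S)) * rd^k := by
    intro m k x
    set w := f (m - 1 - k) (QuasiStabAux.phi E (m - 1 - k) m x) with hw
    set T := (spd.coc m (m - k)).comp (spd.P1 (m - k)) with hT
    have h1 : T1 m k x = T w := by simp only [hT1def, hw, hT]; rfl
    rw [h1]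
    have h2 : ‖T w‖ ≤ ‖T‖ * ‖w‖ := ContinuousLinearMap.le_opNorm _ _
    have h3 := spd.bound1 m (m - k) (by omega)
    have h5 : Real.exp (-spd.d * ((m - (m - (k:ℤ)) : ℤ) : ℝ)) = rd ^ k := by
      have hc1 : ((m - (m - (k:ℤ)) : ℤ) : ℝ) = ((k:ℕ):ℝ) := by push_cast; ring
      rw [hc1, hrd_def, mul_comm (-spd.d) ((k:ℕ):ℝ), Real.exp_nat_mul]
    rw [h5, ← hT] at h3
    have h4 : ‖w‖ ≤ ε / S := hfb _ _
    have h6 : (0:ℝ) ≤ spd.D * rd ^ k := by positivity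
    have h7 := mul_le_mul h3 h4 (norm_nonneg w) h6
    have h8 : spd.D * rd^k * (ε/S) = (spd.D*(ε/S))*rd^k := by ring
    linarith
  have hbT2 : ∀ (m : ℤ) (k : ℕ) (x : X), ‖T2 m k x‖ ≤ (spd.D * (ε/S)) * rb^k := by
    intro m k x
    set w := f (m + k) (QuasiStabAux.phi E (m + k) m x) with hw
    set T := (spd.coc m (m + k + 1)).comp (spd.P2 (m + k + 1)) with hT
    have h1 : T2 m k x = T w := by simp only [hT2def, hw, hT]; rfl
    rw [h1]
    have h2 : ‖T w‖ ≤ ‖T‖ * ‖w‖ := ContinuousLinearMap.le_opNorm _ _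
    have h3 := spd.bound2 m (m + k + 1) (by omega)
    have h5 : Real.exp (-spd.b * ((m + k + 1 - m : ℤ) : ℝ)) = rb ^ (k+1) := by
      have hc1 : ((m + (k:ℤ) + 1 - m : ℤ) : ℝ) = ((k+1:ℕ):ℝ) := by push_cast; ring
      rw [hc1, hrb_def, mul_comm (-spd.b) ((k+1:ℕ):ℝ), Real.exp_nat_mul]
    rw [h5, ← hT] at h3
    have hpow : rb^(k+1) ≤ rb^k := pow_le_pow_of_le_one hrb0 hrb1.le (by omega)
    have h3' : ‖T‖ ≤ spd.D * rb ^ k := by nlinarith [pow_nonneg hrb0 (k+1)]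
    have h4 : ‖w‖ ≤ ε / S := hfb _ _
    have h6 : (0:ℝ) ≤ spd.D * rb ^ k := by positivity
    have h7 := mul_le_mul h3' h4 (norm_nonneg w) h6
    have h8 : spd.D * rb^k * (ε/S) = (spd.D*(ε/S))*rb^k := by ring
    linarith
  -- summability
  have hgeo_d : Summable (fun k : ℕ => (spd.D * (ε/S)) * rd^k) :=
    (summable_geometric_of_lt_one hrd0 hrd1).mul_left _
  have hgeo_b : Summable (fun k : ℕ => (spd.D * (ε/S)) * rb^k) :=
    (summable_geometric_of_lt_one hrb0 hrb1).mul_left _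
  have hs1 : ∀ (m : ℤ) (x : X), Summable (fun k => T1 m k x) := by
    intro m x
    exact Summable.of_norm_bounded hgeo_d (fun k => hbT1 m k x)
  have hs2 : ∀ (m : ℤ) (x : X), Summable (fun k => T2 m k x) := by
    intro m x
    exact Summable.of_norm_bounded hgeo_b (fun k => hbT2 m k x)
  have hts1 : ∀ (m : ℤ) (x : X), ‖∑' k, T1 m k x‖ ≤ (spd.D * (ε/S)) * (1 - rd)⁻¹ := by
    intro m x
    exact tsum_of_norm_bounded ((hasSum_geometric_of_lt_one hrd0 hrd1).mul_left _)
      (fun k => hbT1 m k x)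
  have hts2 : ∀ (m : ℤ) (x : X), ‖∑' k, T2 m k x‖ ≤ (spd.D * (ε/S)) * (1 - rb)⁻¹ := by
    intro m x
    exact tsum_of_norm_bounded ((hasSum_geometric_of_lt_one hrb0 hrb1).mul_left _)
      (fun k => hbT2 m k x)
  -- key functional equations
  have heq1 : ∀ (m : ℤ) (x : X),
      (∑' k, T1 (m+1) k (F m x)) = spd.P1 (m+1) (f m x) + A m (∑' k, T1 m k x) := by
    intro m x
    rw [Summable.tsum_eq_zero_add (hs1 (m+1) (F m x))]
    congr 1
    · simp only [hT1def]
      have i1 : (m:ℤ) + 1 - ((0:ℕ):ℤ) = m + 1 := by push_cast; ring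
      have i2 : (m:ℤ) + 1 - 1 - ((0:ℕ):ℤ) = m := by push_cast; ring
      rw [i1, i2, hshift m m x, QuasiStabAux.phi_self, spd.coc_self]
      rfl
    · rw [(A m).map_tsum (hs1 m x)]
      refine tsum_congr (fun k => ?_)
      simp only [hT1def]
      have i1 : (m:ℤ) + 1 - ((k+1:ℕ):ℤ) = m - (k:ℕ) := by push_cast; ring
      have i2 : (m:ℤ) + 1 - 1 - ((k+1:ℕ):ℤ) = m - 1 - (k:ℕ) := by push_cast; ring
      rw [i1, i2, hshift, spd.coc_step]
      rfl
  have heq2 : ∀ (m : ℤ) (x : X),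
      A m (∑' k, T2 m k x) = spd.P2 (m+1) (f m x) + ∑' k, T2 (m+1) k (F m x) := by
    intro m x
    have hsA : Summable (fun k => A m (T2 m k x)) := by
      refine Summable.of_norm_bounded (g := fun k => (M+1) * ((spd.D * (ε/S)) * rb^k))
        (hgeo_b.mul_left _) (fun k => ?_)
      refine le_trans ((A m).le_opNorm _) ?_
      apply mul_le_mul _ (hbT2 m k x) (norm_nonneg _) (by linarith)
      linarith [(hM m).1]
    rw [(A m).map_tsum (hs2 m x), Summable.tsum_eq_zero_add hsA]
    congr 1
    · simp only [hT2def]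
      have i1 : (m:ℤ) + ((0:ℕ):ℤ) + 1 = m + 1 := by push_cast; ring
      have i2 : (m:ℤ) + ((0:ℕ):ℤ) = m := by push_cast; ring
      rw [i1, i2, QuasiStabAux.phi_self]
      calc A m (spd.coc m (m+1) (spd.P2 (m+1) (f m x)))
          = ((A m).comp (spd.coc m (m+1))) (spd.P2 (m+1) (f m x)) := rfl
        _ = (spd.coc (m+1) (m+1)) (spd.P2 (m+1) (f m x)) := by rw [← spd.coc_step]
        _ = spd.P2 (m+1) (f m x) := by rw [spd.coc_self]; rfl
    · refine tsum_congr (fun k => ?_)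
      simp only [hT2def]
      have i1 : (m:ℤ) + ((k+1:ℕ):ℤ) + 1 = m + 1 + (k:ℕ) + 1 := by push_cast; ring
      have i2 : (m:ℤ) + ((k+1:ℕ):ℤ) = m + 1 + (k:ℕ) := by push_cast; ring
      rw [i1, i2, hshift, spd.coc_step]
      rfl
  -- continuity of the terms
  have hcT1 : ∀ (m : ℤ) (k : ℕ), Continuous (fun x => T1 m k x) := by
    intro m k
    simp only [hT1def]
    exact (spd.coc _ _).continuous.comp ((spd.P1 _).continuous.comp
      ((hfcont _).comp (QuasiStabAux.phi_cont E hEcont hEscont _ _)))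
  have hcT2 : ∀ (m : ℤ) (k : ℕ), Continuous (fun x => T2 m k x) := by
    intro m k
    simp only [hT2def]
    exact (spd.coc _ _).continuous.comp ((spd.P2 _).continuous.comp
      ((hfcont _).comp (QuasiStabAux.phi_cont E hEcont hEscont _ _)))
  -- the maps
  refine ⟨fun m x => x + ((∑' k, T2 m k x) - ∑' k, T1 m k x),
          fun m x => spd.P3 m (f (m-1) (QuasiStabAux.phi E (m-1) m x)),
          ?_, ?_, ?_, ?_, ?_, ?_, ?_⟩
  · -- continuity of h m
    intro m
    have c2 : Continuous (fun x => ∑' k, T2 m k x) :=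
      continuous_tsum (hcT2 m) hgeo_b (fun k x => hbT2 m k x)
    have c1 : Continuous (fun x => ∑' k, T1 m k x) :=
      continuous_tsum (hcT1 m) hgeo_d (fun k x => hbT1 m k x)
    exact continuous_id.add (c2.sub c1)
  · -- continuity of τ m
    intro m
    exact (spd.P3 m).continuous.comp ((hfcont _).comp
      (QuasiStabAux.phi_cont E hEcont hEscont _ _))
  · -- τ m valued in E^c
    intro m x
    have h0 := ContinuousLinearMap.ext_iff.mp (spd.proj3 m)
      (f (m-1) (QuasiStabAux.phi E (m-1) m x))
    simpa using h0
  · -- conjugacy equation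
    intro m x
    show F m x + ((∑' k, T2 (m+1) k (F m x)) - ∑' k, T1 (m+1) k (F m x))
        = A m (x + ((∑' k, T2 m k x) - ∑' k, T1 m k x))
          + spd.P3 (m+1) (f (m+1-1) (QuasiStabAux.phi E (m+1-1) (m+1) (F m x)))
    have e1 := heq1 m x
    have e2' : (∑' k, T2 (m+1) k (F m x))
        = A m (∑' k, T2 m k x) - spd.P2 (m+1) (f m x) := by
      rw [heq2 m x]; abel
    rw [e1, e2']
    have hidx : (m:ℤ) + 1 - 1 = m := by ring
    rw [hidx, hshift m m x, QuasiStabAux.phi_self]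
    rw [hF m x]
    rw [(A m).map_add, (A m).map_sub]
    have hsx := spd.sum_eq (m+1) (f m x)
    nth_rewrite 1 [← hsx]
    abel
  · -- ‖h m x - x‖ ≤ ε
    intro m x
    have he : x + ((∑' k, T2 m k x) - ∑' k, T1 m k x) - x
        = (∑' k, T2 m k x) - ∑' k, T1 m k x := by abel
    rw [he]
    calc ‖(∑' k, T2 m k x) - ∑' k, T1 m k x‖
        ≤ ‖∑' k, T2 m k x‖ + ‖∑' k, T1 m k x‖ := norm_sub_le _ _
      _ ≤ (spd.D * (ε/S)) * (1 - rb)⁻¹ + (spd.D * (ε/S)) * (1 - rd)⁻¹ := by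
          linarith [hts1 m x, hts2 m x]
      _ = (ε/S) * (spd.D * (1-rb)⁻¹ + spd.D * (1-rd)⁻¹) := by ring
      _ ≤ (ε/S) * S := by
          apply mul_le_mul_of_nonneg_left _ hfbnn
          rw [hS_def]; linarith
      _ = ε := div_mul_cancel₀ ε hSpos.ne'
  · -- ‖τ m x‖ ≤ ε
    intro m x
    calc ‖spd.P3 m (f (m-1) (QuasiStabAux.phi E (m-1) m x))‖
        ≤ ‖spd.P3 m‖ * ‖f (m-1) (QuasiStabAux.phi E (m-1) m x)‖ :=
          ContinuousLinearMap.le_opNorm _ _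
      _ ≤ spd.D * (ε/S) := mul_le_mul (hP3norm m) (hfb _ _) (norm_nonneg _) hD.le
      _ ≤ S * (ε/S) := by
          apply mul_le_mul_of_nonneg_right _ hfbnn
          rw [hS_def]; linarith
      _ = ε := by field_simp
  · -- h m x - x ∈ E^{s,u}
    intro m x
    have he : x + ((∑' k, T2 m k x) - ∑' k, T1 m k x) - x
        = (∑' k, T2 m k x) - ∑' k, T1 m k x := by abel
    rw [he, map_sub, (spd.P3 m).map_tsum (hs2 m x), (spd.P3 m).map_tsum (hs1 m x)]
    have hz2 : ∀ k : ℕ, spd.P3 m (T2 m k x) = 0 := by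
      intro k
      simp only [hT2def]
      rw [← hcomm3, horth32, map_zero]
    have hz1 : ∀ k : ℕ, spd.P3 m (T1 m k x) = 0 := by
      intro k
      simp only [hT1def]
      rw [← hcomm3, horth31, map_zero]
    rw [tsum_congr hz2, tsum_congr hz1, tsum_zero, sub_zero]
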